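/- Let θ₀(s) = Θ/(s - s₀) and Σ₀(s) = Σ/(s - s₀) (with Θ, Σ the algebraic background constants, s > s₀) and consider the linearized inhomogeneous system θ₁' = -(Θ/(s-s₀))θ₁ - (2Σ/(s-s₀))σ₁, σ₁' = -(Σ/(s-s₀))θ₁ - (Θ/(s-s₀))σ₁ + C(s), where |C(s)| ≤ C₀ for all s. Then any solution with θ₁(s₀+1) = σ₁(s₀+1) = 0 satisfies |θ₁(s)| + |σ₁(s)| ≤ K C₀ (s - s₀) for s ≥ s₀ + 1, for a constant K depending only on Θ, Σ. -/

import Mathlib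

open Set



/-- MVT bound: derivative bounded on `Icc a s`, zero at `a`. -/
lemma bound0 (a : ℝ) (f D : ℝ → ℝ) (D₀ : ℝ) (hD : ∀ s, |D s| ≤ D₀)
    (hf : ∀ s ∈ Ici a, HasDerivAt f (D s) s) (h0 : f a = 0) :
    ∀ s ∈ Ici a, |f s| ≤ D₀ * (s - a) := by
  intro s hs
  have hs' : a ≤ s := hs
  have key : ‖f s - f a‖ ≤ D₀ * ‖s - a‖ := by
    apply Convex.norm_image_sub_le_of_norm_hasDerivWithin_le
      (f' := D) (s := Icc a s)
      (fun x hx => ((hf x hx.1).hasDerivWithinAt))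
      (fun x _ => hD x) (convex_Icc a s)
      (left_mem_Icc.2 hs') (right_mem_Icc.2 hs')
  rw [h0, sub_zero] at key
  simpa [abs_of_nonneg (sub_nonneg.2 hs')] using key

/-- Bound for `f' = -(2/(s-s₀)) f + D` with zero data at `s₀+1`. -/
lemma bound2 (s₀ : ℝ) (f D : ℝ → ℝ) (D₀ : ℝ) (hD : ∀ s, |D s| ≤ D₀)
    (hf : ∀ s ∈ Ici (s₀ + 1), HasDerivAt f (-(2 / (s - s₀)) * f s + D s) s)
    (h0 : f (s₀ + 1) = 0) :
    ∀ s ∈ Ici (s₀ + 1), |f s| ≤ D₀ * (s - s₀) := by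
  intro s hs
  have hs' : s₀ + 1 ≤ s := hs
  have hD₀ : 0 ≤ D₀ := (abs_nonneg _).trans (hD 0)
  set w : ℝ → ℝ := fun t => (t - s₀) ^ 2 * f t with hw
  have hwd : ∀ t ∈ Icc (s₀ + 1) s, HasDerivWithinAt w ((t - s₀) ^ 2 * D t) (Icc (s₀ + 1) s) t := by
    intro t ht
    have ht1 : (1 : ℝ) ≤ t - s₀ := by linarith [ht.1]
    have htne : t - s₀ ≠ 0 := by linarith
    have h1 : HasDerivAt (fun t => (t - s₀) ^ 2) (2 * (t - s₀)) t := by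
      simpa using (((hasDerivAt_id t).sub_const s₀).fun_pow 2)
    have := h1.mul (hf t ht.1)
    have heq : 2 * (t - s₀) * f t + (t - s₀) ^ 2 * (-(2 / (t - s₀)) * f t + D t)
        = (t - s₀) ^ 2 * D t := by field_simp; ring
    rw [heq] at this
    exact this.hasDerivWithinAt
  have hbnd : ∀ t ∈ Icc (s₀ + 1) s, ‖(t - s₀) ^ 2 * D t‖ ≤ D₀ * (s - s₀) ^ 2 := by
    intro t ht
    have ht1 : (1 : ℝ) ≤ t - s₀ := by linarith [ht.1]
    have hts : t - s₀ ≤ s - s₀ := by linarith [ht.2]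
    have : |(t - s₀) ^ 2 * D t| = (t - s₀) ^ 2 * |D t| := by
      rw [abs_mul, abs_of_nonneg (by positivity)]
    rw [Real.norm_eq_abs, this]
    have h2 : (t - s₀) ^ 2 ≤ (s - s₀) ^ 2 := by nlinarith
    calc (t - s₀) ^ 2 * |D t| ≤ (s - s₀) ^ 2 * D₀ := by
          apply mul_le_mul h2 (hD t) (abs_nonneg _) (by nlinarith)
      _ = D₀ * (s - s₀) ^ 2 := by ring
  have key : ‖w s - w (s₀ + 1)‖ ≤ D₀ * (s - s₀) ^ 2 * ‖s - (s₀ + 1)‖ :=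
    Convex.norm_image_sub_le_of_norm_hasDerivWithin_le hwd hbnd (convex_Icc _ _)
      (left_mem_Icc.2 hs') (right_mem_Icc.2 hs')
  have hw0 : w (s₀ + 1) = 0 := by simp [hw, h0]
  rw [hw0, sub_zero, Real.norm_eq_abs, Real.norm_eq_abs,
    abs_of_nonneg (by linarith : (0:ℝ) ≤ s - (s₀ + 1))] at key
  have hwabs : |w s| = (s - s₀) ^ 2 * |f s| := by
    rw [hw]; rw [abs_mul, abs_of_nonneg (by nlinarith : (0:ℝ) ≤ (s - s₀) ^ 2)]
  rw [hwabs] at key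
  have hpos : (0:ℝ) < (s - s₀) ^ 2 := by nlinarith
  have : |f s| ≤ D₀ * (s - (s₀ + 1)) := by
    nlinarith [abs_nonneg (f s)]
  calc |f s| ≤ D₀ * (s - (s₀ + 1)) := this
    _ ≤ D₀ * (s - s₀) := by nlinarith

/-- Linearized deviation system around the flat power-law background
`θ₀ = Θ/(s-s₀)`, `σ₀ = Sg/(s-s₀)` (with `Θ, Sg` the algebraic background
constants): any solution of
`θ₁' = -(Θ/(s-s₀))θ₁ - (2Sg/(s-s₀))σ₁`,
`σ₁' = -(Sg/(s-s₀))θ₁ - (Θ/(s-s₀))σ₁ + C(s)` with `|C| ≤ C₀` and zero data at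
`s₀+1` grows at most linearly: `|θ₁| + |σ₁| ≤ K·C₀·(s-s₀)`, with `K` depending
only on `Θ, Sg`. -/
theorem stmt_9 (Θ Sg s₀ : ℝ)
    (hbg : -Θ = -Θ ^ 2 / 2 - Sg ^ 2 ∧ -Sg = -Θ * Sg) :
    ∃ K : ℝ, 0 < K ∧ ∀ (θ₁ σ₁ C : ℝ → ℝ) (C₀ : ℝ),
      (∀ s, |C s| ≤ C₀) →
      (∀ s ∈ Ici (s₀ + 1), HasDerivAt θ₁
        (-(Θ / (s - s₀)) * θ₁ s - 2 * Sg / (s - s₀) * σ₁ s) s) →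
      (∀ s ∈ Ici (s₀ + 1), HasDerivAt σ₁
        (-(Sg / (s - s₀)) * θ₁ s - Θ / (s - s₀) * σ₁ s + C s) s) →
      θ₁ (s₀ + 1) = 0 → σ₁ (s₀ + 1) = 0 →
      ∀ s ∈ Ici (s₀ + 1), |θ₁ s| + |σ₁ s| ≤ K * C₀ * (s - s₀) := by
  obtain ⟨h1, h2⟩ := hbg
  refine ⟨4, by norm_num, ?_⟩
  intro θ₁ σ₁ C C₀ hC hθ hσ hθ0 hσ0 s hs
  have hs1 : s₀ + 1 ≤ s := hs
  have hC₀ : 0 ≤ C₀ := (abs_nonneg _).trans (hC 0)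
  have hcase : Sg * (Θ - 1) = 0 := by linear_combination h2
  rcases mul_eq_zero.1 hcase with hSg0 | hΘ1
  · -- Sg = 0
    subst hSg0
    have hΘcase : Θ * (Θ - 2) = 0 := by linear_combination 2 * h1
    rcases mul_eq_zero.1 hΘcase with hΘ0 | hΘ2
    · -- Θ = 0
      subst hΘ0
      have hθb := bound0 (s₀ + 1) θ₁ (fun _ => 0) 0 (fun t => by simp)
        (fun t ht => by simpa using hθ t ht) hθ0 s hs
      have hσb := bound0 (s₀ + 1) σ₁ C C₀ hC
        (fun t ht => by simpa using hσ t ht) hσ0 s hs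
      nlinarith
    · -- Θ = 2
      have hΘ2' : Θ = 2 := by linarith
      subst hΘ2'
      have hθb := bound2 s₀ θ₁ (fun _ => 0) 0 (fun t => by simp)
        (fun t ht => by
          have h := hθ t ht
          convert h using 1
          ring) hθ0 s hs
      have hσb := bound2 s₀ σ₁ C C₀ hC
        (fun t ht => by
          have h := hσ t ht
          convert h using 1
          ring) hσ0 s hs
      nlinarith
  · -- Θ = 1
    have hΘ : Θ = 1 := by linarith
    subst hΘ
    have hSg : Sg ^ 2 = 1 / 2 := by linear_combination h1
    have hSgle : |Sg| ≤ 1 := by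
      rw [abs_le]; constructor <;> nlinarith
    have hSgge : (1 : ℝ) / 2 ≤ |Sg| := by
      nlinarith [abs_nonneg Sg, sq_abs Sg]
    have hDu : ∀ t, |2 * Sg * C t| ≤ 2 * C₀ := by
      intro t
      have h := hC t
      have habs : |2 * Sg * C t| = 2 * |Sg| * |C t| := by
        rw [abs_mul, abs_mul, abs_two]
      rw [habs]
      nlinarith [abs_nonneg (C t)]
    have hub := bound2 s₀ (fun t => θ₁ t + 2 * Sg * σ₁ t) (fun t => 2 * Sg * C t)
      (2 * C₀) hDu
      (fun t ht => by
        have h := (hθ t ht).add ((hσ t ht).const_mul (2 * Sg))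
        refine h.congr_deriv ?_; symm
        linear_combination (2 * θ₁ t / (t - s₀)) * hSg)
      (by simp [hθ0, hσ0]) s hs
    have hvb := bound0 (s₀ + 1) (fun t => θ₁ t - 2 * Sg * σ₁ t)
      (fun t => -(2 * Sg * C t)) (2 * C₀) (fun t => by rw [abs_neg]; exact hDu t)
      (fun t ht => by
        have h := (hθ t ht).sub ((hσ t ht).const_mul (2 * Sg))
        refine h.congr_deriv ?_; symm
        linear_combination (-(2 * θ₁ t) / (t - s₀)) * hSg)
      (by simp [hθ0, hσ0]) s hs
    have e1 : 2 * |θ₁ s| ≤ |θ₁ s + 2 * Sg * σ₁ s| + |θ₁ s - 2 * Sg * σ₁ s| := by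
      have h := abs_add_le (θ₁ s + 2 * Sg * σ₁ s) (θ₁ s - 2 * Sg * σ₁ s)
      rw [show (θ₁ s + 2 * Sg * σ₁ s) + (θ₁ s - 2 * Sg * σ₁ s) = 2 * θ₁ s from by ring,
        abs_mul, abs_two] at h
      exact h
    have e2 : 4 * |Sg| * |σ₁ s| ≤ |θ₁ s + 2 * Sg * σ₁ s| + |θ₁ s - 2 * Sg * σ₁ s| := by
      have h : |(θ₁ s + 2 * Sg * σ₁ s) - (θ₁ s - 2 * Sg * σ₁ s)|
          ≤ |θ₁ s + 2 * Sg * σ₁ s| + |θ₁ s - 2 * Sg * σ₁ s| := abs_sub _ _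
      rw [show (θ₁ s + 2 * Sg * σ₁ s) - (θ₁ s - 2 * Sg * σ₁ s) = 4 * Sg * σ₁ s from by ring,
        abs_mul, abs_mul] at h
      norm_num at h
      linarith
    nlinarith [abs_nonneg (σ₁ s), abs_nonneg (θ₁ s)]
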